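/- Let N ≥ 1 be an integer. For j = 1, 2, let σ₀^{(j)} = 1 and σ₁^{(j)}, …, σ_N^{(j)} be positive real numbers with σ_k^{(j)} ≠ σ_{k−1}^{(j)} for each k, set λ_k^{(j)} := (σ_k^{(j)} + σ_{k−1}^{(j)})/(2(σ_k^{(j)} − σ_{k−1}^{(j)})), and let r₁^{(j)} > r₂^{(j)} > ⋯ > r_N^{(j)} > 0. Let M_{N,j}^{(n)} and Υ_{N,j}^{(n)} be the N×N matrices built from (λ^{(j)}, r^{(j)}), and assume M_{N,j}^{(n)} is invertible for every positive integer n and j = 1, 2. If there exists n₀ such that eᵀ Υ_{N,1}^{(n)} (M_{N,1}^{(n)})^{−1} e = eᵀ Υ_{N,2}^{(n)} (M_{N,2}^{(n)})^{−1} e for every integer n ≥ n₀, then r_k^{(1)} = r_k^{(2)} for every k = 1, …, N. -/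

import Mathlib

open Matrix Filter Topology

/-- The `n`-order generalized polarization matrix `M_N^{(n)}` of an `N`-layer concentric
disk structure: diagonal entries `-2λ_i`, entries `(r_j/r_i)^{2n}` above the diagonal and
`-1` below it (indices shifted by one, from `Fin N` to `{1, …, N}`). -/
noncomputable def GPM (N : ℕ) (lam r : ℕ → ℝ) (n : ℕ) : Matrix (Fin N) (Fin N) ℝ :=
  Matrix.of fun i j =>
    if i = j then -2 * lam ((i : ℕ) + 1)
    else if i < j then (r ((j : ℕ) + 1) / r ((i : ℕ) + 1)) ^ (2 * n)
    else -1

/-- `Υ_N^{(n)} = diag(r₁^{2n}, …, r_N^{2n})`. -/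
noncomputable def Upsilon (N : ℕ) (r : ℕ → ℝ) (n : ℕ) : Matrix (Fin N) (Fin N) ℝ :=
  Matrix.diagonal fun i : Fin N => r ((i : ℕ) + 1) ^ (2 * n)



noncomputable def meas (N : ℕ) (lam r : ℕ → ℝ) (n : ℕ) : ℝ :=
  (fun _ : Fin N => (1 : ℝ)) ⬝ᵥ ((Upsilon N r n * (GPM N lam r n)⁻¹) *ᵥ fun _ : Fin N => (1 : ℝ))

lemma meas_eq_sum (N : ℕ) (lam r : ℕ → ℝ) (n : ℕ) :
    meas N lam r n
      = ∑ i : Fin N, r ((i : ℕ) + 1) ^ (2 * n) * (((GPM N lam r n)⁻¹) *ᵥ fun _ => (1 : ℝ)) i := by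
  simp [meas, dotProduct, ← Matrix.mulVec_mulVec, Upsilon, Matrix.mulVec_diagonal]

lemma gpm_submatrix (N : ℕ) (lam r : ℕ → ℝ) (n : ℕ) :
    (GPM (N+1) lam r n).submatrix Fin.succ Fin.succ
      = GPM N (fun k => lam (k+1)) (fun k => r (k+1)) n := by
  ext i j
  simp only [GPM, Matrix.submatrix_apply, Matrix.of_apply, Fin.succ_inj, Fin.succ_lt_succ_iff,
    Fin.val_succ]

lemma meas_succ (N : ℕ) (lam r : ℕ → ℝ) (n : ℕ)
    (hr1 : r 1 ≠ 0)
    (hM' : IsUnit (GPM N (fun k => lam (k+1)) (fun k => r (k+1)) n).det)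
    (hM : IsUnit (GPM (N+1) lam r n).det)
    (hu : meas N (fun k => lam (k+1)) (fun k => r (k+1)) n / r 1 ^ (2*n) ≠ 2 * lam 1) :
    meas (N+1) lam r n =
      r 1 ^ (2*n) *
        ((1 - 2 * lam 1 * (meas N (fun k => lam (k+1)) (fun k => r (k+1)) n / r 1 ^ (2*n))) /
          ((meas N (fun k => lam (k+1)) (fun k => r (k+1)) n / r 1 ^ (2*n)) - 2 * lam 1)) := by
  set M' := GPM N (fun k => lam (k+1)) (fun k => r (k+1)) n with hM'def
  set w : Fin N → ℝ := M'⁻¹ *ᵥ (fun _ => 1) with hwdef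
  set g : ℝ := meas N (fun k => lam (k+1)) (fun k => r (k+1)) n with hgdef
  set u : ℝ := g / r 1 ^ (2*n) with hudef
  have hrn : r 1 ^ (2*n) ≠ 0 := pow_ne_zero _ hr1
  have hd : u - 2 * lam 1 ≠ 0 := sub_ne_zero.mpr hu
  set z₁ : ℝ := (1 - u) / (u - 2 * lam 1) with hz₁def
  set z : Fin (N+1) → ℝ := Fin.cons z₁ (fun i => (1 + z₁) * w i) with hzdef
  have hg : g = ∑ i : Fin N, r ((i : ℕ) + 1 + 1) ^ (2*n) * w i := by
    rw [hgdef, meas_eq_sum]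
  have hMw : M' *ᵥ w = fun _ => 1 := by
    rw [hwdef, Matrix.mulVec_mulVec, Matrix.mul_nonsing_inv _ hM', Matrix.one_mulVec]
  have hz : GPM (N+1) lam r n *ᵥ z = fun _ => 1 := by
    funext i
    have hMv : (GPM (N+1) lam r n *ᵥ z) i = ∑ j, GPM (N+1) lam r n i j * z j := rfl
    induction i using Fin.cases with
    | zero =>
      rw [hMv, Fin.sum_univ_succ]
      have h00 : GPM (N+1) lam r n 0 0 = -2 * lam 1 := by simp [GPM]
      have h0j : ∀ j : Fin N, GPM (N+1) lam r n 0 j.succ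
          = r ((j : ℕ) + 1 + 1) ^ (2*n) / r 1 ^ (2*n) := by
        intro j
        have h1 : (0 : Fin (N+1)) ≠ j.succ := (Fin.succ_ne_zero j).symm
        have h2 : (0 : Fin (N+1)) < j.succ := Fin.succ_pos j
        simp [GPM, h1, h2, div_pow]
      simp only [h00, h0j, hzdef, Fin.cons_zero, Fin.cons_succ]
      have : ∑ j : Fin N, r ((j:ℕ)+1+1) ^ (2*n) / r 1 ^ (2*n) * ((1 + z₁) * w j)
          = (1 + z₁) * u := by
        rw [hudef, hg, Finset.sum_div, Finset.mul_sum]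
        congr 1; funext j; ring
      rw [this, hz₁def]
      field_simp
      ring
    | succ i =>
      rw [hMv, Fin.sum_univ_succ]
      have hi0 : GPM (N+1) lam r n i.succ 0 = -1 := by
        have h1 : i.succ ≠ (0 : Fin (N+1)) := Fin.succ_ne_zero i
        have h2 : ¬ (i.succ < (0 : Fin (N+1))) := by simp
        simp [GPM, h1, h2]
      have hij : ∀ j : Fin N, GPM (N+1) lam r n i.succ j.succ = M' i j := fun j => by
        rw [hM'def, ← gpm_submatrix]; rfl
      simp only [hi0, hij, hzdef, Fin.cons_zero, Fin.cons_succ]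
      have hone : ∑ j : Fin N, M' i j * w j = 1 := by
        have := congrFun hMw i
        simpa [Matrix.mulVec, dotProduct] using this
      have hsum : ∑ j : Fin N, M' i j * ((1 + z₁) * w j) = 1 + z₁ := by
        calc ∑ j : Fin N, M' i j * ((1 + z₁) * w j)
            = (1 + z₁) * ∑ j : Fin N, M' i j * w j := by
              rw [Finset.mul_sum]; congr 1; funext j; ring
          _ = 1 + z₁ := by rw [hone]; ring
      rw [hsum]; ring
  have hzinv : (GPM (N+1) lam r n)⁻¹ *ᵥ (fun _ => (1:ℝ)) = z := by
    have h2 : (GPM (N+1) lam r n)⁻¹ *ᵥ (GPM (N+1) lam r n *ᵥ z) = z := by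
      rw [Matrix.mulVec_mulVec, Matrix.nonsing_inv_mul _ hM, Matrix.one_mulVec]
    rw [← h2, hz]
  rw [meas_eq_sum, hzinv, Fin.sum_univ_succ]
  have hgu : g = u * r 1 ^ (2*n) := by rw [hudef]; field_simp
  have hsum2 : ∑ j : Fin N, r ((j.succ : ℕ) + 1) ^ (2*n) * z j.succ = (1 + z₁) * g := by
    rw [hg, Finset.mul_sum]
    congr 1; funext j
    simp only [hzdef, Fin.cons_succ, Fin.val_succ]
    ring
  rw [hsum2, hgu]
  simp only [hzdef, hz₁def, Fin.cons_zero, Fin.val_zero, zero_add]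
  field_simp
  ring




lemma r_chain (N : ℕ) (r : ℕ → ℝ) (hdec : ∀ k, 1 ≤ k → k < N → r (k+1) < r k) :
    ∀ i j, 1 ≤ i → i < j → j ≤ N → r j < r i := by
  intro i j hi hij hjN
  induction j with
  | zero => omega
  | succ m ih =>
    have hm1 : 1 ≤ m := by omega
    have hmN : m < N := by omega
    rcases Nat.lt_or_ge i m with h | h
    · exact lt_trans (hdec m hm1 hmN) (ih h (by omega))
    · have : i = m := by omega
      rw [this]
      exact hdec m hm1 hmN

lemma gpm_det_tendsto (N : ℕ) (lam r : ℕ → ℝ)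
    (hrpos : ∀ k, 1 ≤ k → k ≤ N → 0 < r k)
    (hdec : ∀ k, 1 ≤ k → k < N → r (k+1) < r k) :
    Tendsto (fun n => (GPM N lam r n).det) atTop
      (𝓝 (∏ i : Fin N, (-2 * lam ((i : ℕ) + 1)))) := by
  set L : Matrix (Fin N) (Fin N) ℝ := Matrix.of fun i j =>
    if i = j then -2 * lam ((i : ℕ) + 1) else if i < j then 0 else -1 with hLdef
  have hentry : ∀ i j : Fin N, Tendsto (fun n => GPM N lam r n i j) atTop (𝓝 (L i j)) := by
    intro i j
    by_cases hij : i = j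
    · simp [GPM, hLdef, hij]
    · by_cases hlt : i < j
      · have hjpos : 0 < r ((j : ℕ) + 1) := hrpos _ (by omega) (by omega)
        have hipos : 0 < r ((i : ℕ) + 1) := hrpos _ (by omega) (by omega)
        have hlt' : r ((j : ℕ) + 1) < r ((i : ℕ) + 1) :=
          r_chain N r hdec _ _ (by omega) (by exact_mod_cast by omega : (i:ℕ)+1 < (j:ℕ)+1) (by omega)
        have hq0 : 0 ≤ r ((j : ℕ) + 1) / r ((i : ℕ) + 1) := le_of_lt (div_pos hjpos hipos)
        have hq1 : r ((j : ℕ) + 1) / r ((i : ℕ) + 1) < 1 := (div_lt_one hipos).mpr hlt'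
        have h2 : Tendsto (fun n => ((r ((j : ℕ) + 1) / r ((i : ℕ) + 1))^2) ^ n) atTop (𝓝 0) :=
          tendsto_pow_atTop_nhds_zero_of_lt_one (sq_nonneg _)
            (by nlinarith)
        have heq : ∀ n : ℕ, (r ((j : ℕ) + 1) / r ((i : ℕ) + 1)) ^ (2*n)
            = ((r ((j : ℕ) + 1) / r ((i : ℕ) + 1))^2) ^ n := fun n => by rw [← pow_mul]
        simp only [GPM, hLdef, Matrix.of_apply, if_neg hij, if_pos hlt]
        exact Tendsto.congr (fun n => (heq n).symm) h2
      · simp [GPM, hLdef, hij, hlt]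
  have hdet : ∀ n : ℕ, (GPM N lam r n).det
      = ∑ σ : Equiv.Perm (Fin N), (Equiv.Perm.sign σ : ℤ) * ∏ i, GPM N lam r n (σ i) i :=
    fun n => Matrix.det_apply' _
  have hLdet : L.det = ∑ σ : Equiv.Perm (Fin N), (Equiv.Perm.sign σ : ℤ) * ∏ i, L (σ i) i :=
    Matrix.det_apply' _
  have htend : Tendsto (fun n => (GPM N lam r n).det) atTop (𝓝 L.det) := by
    rw [hLdet]
    apply Tendsto.congr (fun n => (hdet n).symm)
    apply tendsto_finset_sum
    intro σ _
    exact (tendsto_finset_prod _ (fun i _ => hentry (σ i) i)).const_mul _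
  have hLval : L.det = ∏ i : Fin N, (-2 * lam ((i : ℕ) + 1)) := by
    have hbt : L.BlockTriangular OrderDual.toDual := by
      intro i j hlt
      simp only [hLdef, Matrix.of_apply]
      have h1 : i ≠ j := by
        intro h; rw [h] at hlt; exact lt_irrefl _ hlt
      have h2 : i < j := hlt
      simp [h1, h2, not_lt_of_gt h2]
    rw [Matrix.det_of_lowerTriangular L hbt]
    apply Finset.prod_congr rfl
    intro i _
    simp [hLdef]
  rwa [hLval] at htend

lemma gpm_ev_inv (N : ℕ) (lam r : ℕ → ℝ)
    (hlam : ∀ k, 1 ≤ k → k ≤ N → lam k ≠ 0)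
    (hrpos : ∀ k, 1 ≤ k → k ≤ N → 0 < r k)
    (hdec : ∀ k, 1 ≤ k → k < N → r (k+1) < r k) :
    ∀ᶠ n in atTop, IsUnit (GPM N lam r n).det := by
  have hne : (∏ i : Fin N, (-2 * lam ((i : ℕ) + 1))) ≠ 0 := by
    apply Finset.prod_ne_zero_iff.mpr
    intro i _
    have := hlam ((i : ℕ) + 1) (by omega) (by omega)
    intro h
    apply this
    linarith [h]
  have := (gpm_det_tendsto N lam r hrpos hdec).eventually_ne hne
  filter_upwards [this] with n hn
  exact isUnit_iff_ne_zero.mpr hn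

lemma lam_ne_of_abs (x : ℝ) (h : 1 < |2 * x|) : x ≠ 0 := by
  intro h0
  rw [h0] at h
  norm_num at h

lemma two_lam_ne_of_abs (x : ℝ) (h : 1 < |2 * x|) : 2 * x ≠ 0 := by
  intro h0
  rw [h0] at h
  norm_num at h

lemma meas_zero' (lam r : ℕ → ℝ) (n : ℕ) : meas 0 lam r n = 0 := by
  rw [meas_eq_sum]; simp

lemma meas_asymp_aux (N : ℕ) (lam r : ℕ → ℝ)
    (hlam1 : 1 < |2 * lam 1|) (hr1 : 0 < r 1)
    (hM' : ∀ᶠ n in atTop, IsUnit (GPM N (fun k => lam (k+1)) (fun k => r (k+1)) n).det)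
    (hM : ∀ᶠ n in atTop, IsUnit (GPM (N+1) lam r n).det)
    (hu : Tendsto (fun n => meas N (fun k => lam (k+1)) (fun k => r (k+1)) n / r 1 ^ (2*n))
      atTop (𝓝 0)) :
    Tendsto (fun n => meas (N+1) lam r n / r 1 ^ (2*n)) atTop (𝓝 (-1/(2 * lam 1))) := by
  have hl0 : 2 * lam 1 ≠ 0 := two_lam_ne_of_abs _ hlam1
  have hne : ∀ᶠ n in atTop,
      meas N (fun k => lam (k+1)) (fun k => r (k+1)) n / r 1 ^ (2*n) ≠ 2 * lam 1 :=
    hu.eventually_ne (Ne.symm hl0)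
  have heq : ∀ᶠ n in atTop, meas (N+1) lam r n / r 1 ^ (2*n)
      = (1 - 2 * lam 1 * (meas N (fun k => lam (k+1)) (fun k => r (k+1)) n / r 1 ^ (2*n)))
        / ((meas N (fun k => lam (k+1)) (fun k => r (k+1)) n / r 1 ^ (2*n)) - 2 * lam 1) := by
    filter_upwards [hM', hM, hne] with n h1 h2 h3
    rw [meas_succ N lam r n (ne_of_gt hr1) h1 h2 h3,
      mul_div_cancel_left₀ _ (pow_ne_zero _ (ne_of_gt hr1))]
  have hT : Tendsto (fun n =>
      (1 - 2 * lam 1 * (meas N (fun k => lam (k+1)) (fun k => r (k+1)) n / r 1 ^ (2*n)))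
        / ((meas N (fun k => lam (k+1)) (fun k => r (k+1)) n / r 1 ^ (2*n)) - 2 * lam 1))
      atTop (𝓝 ((1 - 2 * lam 1 * 0) / (0 - 2 * lam 1))) := by
    apply Tendsto.div
    · exact tendsto_const_nhds.sub (hu.const_mul _)
    · exact hu.sub tendsto_const_nhds
    · simpa using hl0
  have hval : (1 - 2 * lam 1 * 0) / (0 - 2 * lam 1) = -1 / (2 * lam 1) := by
    rw [mul_zero, sub_zero, zero_sub, div_neg, neg_div]
  rw [← hval]
  exact hT.congr' (heq.mono fun n h => h.symm)

lemma meas_asymp (N : ℕ) : ∀ (lam r : ℕ → ℝ),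
    (∀ k, 1 ≤ k → k ≤ N+1 → 1 < |2 * lam k|) →
    (∀ k, 1 ≤ k → k ≤ N+1 → 0 < r k) →
    (∀ k, 1 ≤ k → k < N+1 → r (k+1) < r k) →
    Tendsto (fun n => meas (N+1) lam r n / r 1 ^ (2*n)) atTop (𝓝 (-1/(2 * lam 1))) := by
  induction N with
  | zero =>
    intro lam r hlam hr hdec
    apply meas_asymp_aux 0 lam r (hlam 1 le_rfl (by omega)) (hr 1 le_rfl (by omega))
    · exact Filter.Eventually.of_forall (fun n => by simp)
    · exact gpm_ev_inv 1 lam r (fun k h1 h2 => lam_ne_of_abs _ (hlam k h1 h2))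
        (fun k h1 h2 => hr k h1 h2) (fun k h1 h2 => hdec k h1 h2)
    · have h0 : ∀ n : ℕ, meas 0 (fun k => lam (k+1)) (fun k => r (k+1)) n / r 1 ^ (2*n) = 0 :=
        fun n => by rw [meas_zero']; simp
      exact Tendsto.congr (fun n => (h0 n).symm) tendsto_const_nhds
  | succ M ih =>
    intro lam r hlam hr hdec
    apply meas_asymp_aux (M+1) lam r (hlam 1 le_rfl (by omega)) (hr 1 le_rfl (by omega))
    · exact gpm_ev_inv (M+1) (fun k => lam (k+1)) (fun k => r (k+1))
        (fun k h1 h2 => lam_ne_of_abs _ (hlam (k+1) (by omega) (by omega)))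
        (fun k h1 h2 => hr (k+1) (by omega) (by omega))
        (fun k h1 h2 => hdec (k+1) (by omega) (by omega))
    · exact gpm_ev_inv (M+2) lam r (fun k h1 h2 => lam_ne_of_abs _ (hlam k h1 h2))
        (fun k h1 h2 => hr k h1 h2) (fun k h1 h2 => hdec k h1 h2)
    · have hinner := ih (fun k => lam (k+1)) (fun k => r (k+1))
        (fun k h1 h2 => hlam (k+1) (by omega) (by omega))
        (fun k h1 h2 => hr (k+1) (by omega) (by omega))
        (fun k h1 h2 => hdec (k+1) (by omega) (by omega))
      have hr1 : 0 < r 1 := hr 1 le_rfl (by omega)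
      have hr2 : 0 < r 2 := hr 2 (by omega) (by omega)
      have hlt : r 2 < r 1 := hdec 1 le_rfl (by omega)
      have hq0 : 0 ≤ r 2 / r 1 := le_of_lt (div_pos hr2 hr1)
      have hq1 : r 2 / r 1 < 1 := (div_lt_one hr1).mpr hlt
      have hgeo : Tendsto (fun n : ℕ => ((r 2 / r 1)^2)^n) atTop (𝓝 0) :=
        tendsto_pow_atTop_nhds_zero_of_lt_one (sq_nonneg _) (by nlinarith)
      have heq : ∀ n : ℕ, meas (M+1) (fun k => lam (k+1)) (fun k => r (k+1)) n / r 1 ^ (2*n)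
          = (meas (M+1) (fun k => lam (k+1)) (fun k => r (k+1)) n / r 2 ^ (2*n))
            * ((r 2 / r 1)^2)^n := by
        intro n
        rw [← pow_mul, div_pow]
        field_simp
      have hmul := hinner.mul hgeo
      rw [mul_zero] at hmul
      refine Tendsto.congr (fun n => (heq n).symm) ?_
      exact hmul

lemma u_tendsto (N : ℕ) (lam r : ℕ → ℝ)
    (hlam : ∀ k, 1 ≤ k → k ≤ N+1 → 1 < |2 * lam k|)
    (hr : ∀ k, 1 ≤ k → k ≤ N+1 → 0 < r k)
    (hdec : ∀ k, 1 ≤ k → k < N+1 → r (k+1) < r k) :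
    Tendsto (fun n => meas N (fun k => lam (k+1)) (fun k => r (k+1)) n / r 1 ^ (2*n))
      atTop (𝓝 0) := by
  cases N with
  | zero =>
    have h0 : ∀ n : ℕ, meas 0 (fun k => lam (k+1)) (fun k => r (k+1)) n / r 1 ^ (2*n) = 0 :=
      fun n => by rw [meas_zero']; simp
    exact Tendsto.congr (fun n => (h0 n).symm) tendsto_const_nhds
  | succ M =>
    have hinner := meas_asymp M (fun k => lam (k+1)) (fun k => r (k+1))
      (fun k h1 h2 => hlam (k+1) (by omega) (by omega))
      (fun k h1 h2 => hr (k+1) (by omega) (by omega))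
      (fun k h1 h2 => hdec (k+1) (by omega) (by omega))
    have hr1 : 0 < r 1 := hr 1 le_rfl (by omega)
    have hr2 : 0 < r 2 := hr 2 (by omega) (by omega)
    have hlt : r 2 < r 1 := hdec 1 le_rfl (by omega)
    have hq0 : 0 ≤ r 2 / r 1 := le_of_lt (div_pos hr2 hr1)
    have hq1 : r 2 / r 1 < 1 := (div_lt_one hr1).mpr hlt
    have hgeo : Tendsto (fun n : ℕ => ((r 2 / r 1)^2)^n) atTop (𝓝 0) :=
      tendsto_pow_atTop_nhds_zero_of_lt_one (sq_nonneg _) (by nlinarith)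
    have heq : ∀ n : ℕ, meas (M+1) (fun k => lam (k+1)) (fun k => r (k+1)) n / r 1 ^ (2*n)
        = (meas (M+1) (fun k => lam (k+1)) (fun k => r (k+1)) n / r 2 ^ (2*n))
          * ((r 2 / r 1)^2)^n := by
      intro n
      rw [← pow_mul, div_pow]
      field_simp
    have hmul := hinner.mul hgeo
    rw [mul_zero] at hmul
    exact Tendsto.congr (fun n => (heq n).symm) hmul

lemma key (N : ℕ) : ∀ (lam₁ lam₂ r₁ r₂ : ℕ → ℝ),
    (∀ k, 1 ≤ k → k ≤ N → 1 < |2 * lam₁ k|) →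
    (∀ k, 1 ≤ k → k ≤ N → 1 < |2 * lam₂ k|) →
    (∀ k, 1 ≤ k → k ≤ N → 0 < r₁ k) →
    (∀ k, 1 ≤ k → k < N → r₁ (k+1) < r₁ k) →
    (∀ k, 1 ≤ k → k ≤ N → 0 < r₂ k) →
    (∀ k, 1 ≤ k → k < N → r₂ (k+1) < r₂ k) →
    (∀ᶠ n in atTop, meas N lam₁ r₁ n = meas N lam₂ r₂ n) →
    ∀ k, 1 ≤ k → k ≤ N → r₁ k = r₂ k := by
  induction N with
  | zero => intro _ _ _ _ _ _ _ _ _ _ _ k h1 h2; omega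
  | succ M ih =>
    intro lam₁ lam₂ r₁ r₂ hl1 hl2 hp1 hd1 hp2 hd2 hmeas
    have A1 := meas_asymp M lam₁ r₁ hl1 hp1 hd1
    have A2 := meas_asymp M lam₂ r₂ hl2 hp2 hd2
    have hLam1ne : 2 * lam₁ 1 ≠ 0 := two_lam_ne_of_abs _ (hl1 1 le_rfl (by omega))
    have hLam2ne : 2 * lam₂ 1 ≠ 0 := two_lam_ne_of_abs _ (hl2 1 le_rfl (by omega))
    have hρ1 : (-1 / (2 * lam₁ 1)) ≠ 0 := div_ne_zero (by norm_num) hLam1ne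
    have hρ2 : (-1 / (2 * lam₂ 1)) ≠ 0 := div_ne_zero (by norm_num) hLam2ne
    have hr11 : 0 < r₁ 1 := hp1 1 le_rfl (by omega)
    have hr21 : 0 < r₂ 1 := hp2 1 le_rfl (by omega)
    have A1' : Tendsto (fun n => meas (M+1) lam₁ r₁ n / r₂ 1 ^ (2*n)) atTop
        (𝓝 (-1/(2 * lam₂ 1))) := by
      apply Tendsto.congr' _ A2
      filter_upwards [hmeas] with n hn
      rw [hn]
    have hMne : ∀ᶠ n in atTop, meas (M+1) lam₁ r₁ n / r₁ 1 ^ (2*n) ≠ 0 := A1.eventually_ne hρ1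
    have hT : Tendsto (fun n => ((r₁ 1 / r₂ 1)^2)^n) atTop
        (𝓝 ((-1/(2 * lam₂ 1)) / (-1/(2 * lam₁ 1)))) := by
      have h2 := A1'.div A1 hρ1
      apply Tendsto.congr' _ h2
      filter_upwards [hMne] with n hn
      have hm : meas (M+1) lam₁ r₁ n ≠ 0 := by
        intro h0; apply hn; rw [h0]; simp
      simp only [Pi.div_apply]
      rw [← pow_mul, div_pow]
      field_simp
    have ht1 : r₁ 1 = r₂ 1 := by
      have hcne : (-1/(2 * lam₂ 1)) / (-1/(2 * lam₁ 1)) ≠ 0 := div_ne_zero hρ2 hρ1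
      rcases lt_trichotomy ((r₁ 1 / r₂ 1)^2) 1 with hlt | heq1 | hgt
      · have h0 := tendsto_pow_atTop_nhds_zero_of_lt_one (sq_nonneg (r₁ 1 / r₂ 1)) hlt
        exact absurd (tendsto_nhds_unique hT h0) hcne
      · have h' : (r₁ 1 / r₂ 1 - 1) * (r₁ 1 / r₂ 1 + 1) = 0 := by linear_combination heq1
        rcases mul_eq_zero.mp h' with h'' | h''
        · have : r₁ 1 / r₂ 1 = 1 := by linarith
          field_simp at this
          exact this
        · have hqpos : 0 < r₁ 1 / r₂ 1 := div_pos hr11 hr21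
          linarith
      · have h0 := tendsto_pow_atTop_atTop_of_one_lt hgt
        exact absurd hT (not_tendsto_nhds_of_tendsto_atTop h0 _)
    have hlameq : lam₁ 1 = lam₂ 1 := by
      rw [← ht1] at A1'
      have huniq := tendsto_nhds_unique A1 A1'
      field_simp at huniq
      rw [neg_inj, one_div, one_div, _root_.inv_inj] at huniq; exact huniq
    have hu1 := u_tendsto M lam₁ r₁ hl1 hp1 hd1
    have hu2 := u_tendsto M lam₂ r₂ hl2 hp2 hd2
    have hne1 : ∀ᶠ n in atTop,
        meas M (fun k => lam₁ (k+1)) (fun k => r₁ (k+1)) n / r₁ 1 ^ (2*n) ≠ 2 * lam₁ 1 :=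
      hu1.eventually_ne (Ne.symm hLam1ne)
    have hne2 : ∀ᶠ n in atTop,
        meas M (fun k => lam₂ (k+1)) (fun k => r₂ (k+1)) n / r₂ 1 ^ (2*n) ≠ 2 * lam₂ 1 :=
      hu2.eventually_ne (Ne.symm hLam2ne)
    have hI1' := gpm_ev_inv M (fun k => lam₁ (k+1)) (fun k => r₁ (k+1))
      (fun k h1 h2 => lam_ne_of_abs _ (hl1 (k+1) (by omega) (by omega)))
      (fun k h1 h2 => hp1 (k+1) (by omega) (by omega))
      (fun k h1 h2 => hd1 (k+1) (by omega) (by omega))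
    have hI1 := gpm_ev_inv (M+1) lam₁ r₁
      (fun k h1 h2 => lam_ne_of_abs _ (hl1 k h1 h2)) hp1 hd1
    have hI2' := gpm_ev_inv M (fun k => lam₂ (k+1)) (fun k => r₂ (k+1))
      (fun k h1 h2 => lam_ne_of_abs _ (hl2 (k+1) (by omega) (by omega)))
      (fun k h1 h2 => hp2 (k+1) (by omega) (by omega))
      (fun k h1 h2 => hd2 (k+1) (by omega) (by omega))
    have hI2 := gpm_ev_inv (M+1) lam₂ r₂
      (fun k h1 h2 => lam_ne_of_abs _ (hl2 k h1 h2)) hp2 hd2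
    have h4 : (2 * lam₁ 1)^2 - 1 ≠ 0 := by
      have habs := hl1 1 le_rfl (by omega)
      have := sq_abs (2 * lam₁ 1)
      nlinarith [abs_nonneg (2 * lam₁ 1)]
    have hinnereq : ∀ᶠ n in atTop,
        meas M (fun k => lam₁ (k+1)) (fun k => r₁ (k+1)) n
          = meas M (fun k => lam₂ (k+1)) (fun k => r₂ (k+1)) n := by
      filter_upwards [hmeas, hne1, hne2, hI1', hI1, hI2', hI2] with n hm h1 h2 g1' g1 g2' g2
      have e1 := meas_succ M lam₁ r₁ n (ne_of_gt hr11) g1' g1 h1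
      have e2 := meas_succ M lam₂ r₂ n (ne_of_gt hr21) g2' g2 h2
      rw [e1, e2] at hm
      rw [← ht1, ← hlameq] at hm h2
      set u1 := meas M (fun k => lam₁ (k+1)) (fun k => r₁ (k+1)) n / r₁ 1 ^ (2*n) with hu1def
      set u2 := meas M (fun k => lam₂ (k+1)) (fun k => r₂ (k+1)) n / r₁ 1 ^ (2*n) with hu2def
      have hrn : r₁ 1 ^ (2*n) ≠ 0 := pow_ne_zero _ (ne_of_gt hr11)
      have hm' : (1 - 2 * lam₁ 1 * u1) / (u1 - 2 * lam₁ 1)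
          = (1 - 2 * lam₁ 1 * u2) / (u2 - 2 * lam₁ 1) := mul_left_cancel₀ hrn hm
      have hd1' : u1 - 2 * lam₁ 1 ≠ 0 := sub_ne_zero.mpr h1
      have hd2' : u2 - 2 * lam₁ 1 ≠ 0 := sub_ne_zero.mpr h2
      have hcross := (div_eq_div_iff hd1' hd2').mp hm'
      have hz : ((2 * lam₁ 1)^2 - 1) * (u1 - u2) = 0 := by linear_combination hcross
      have huu : u1 = u2 := by
        rcases mul_eq_zero.mp hz with hcz | hcz
        · exact absurd hcz h4
        · linarith
      have hm1 : meas M (fun k => lam₁ (k+1)) (fun k => r₁ (k+1)) n = u1 * r₁ 1 ^ (2*n) := by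
        rw [hu1def]; field_simp
      have hm2 : meas M (fun k => lam₂ (k+1)) (fun k => r₂ (k+1)) n = u2 * r₁ 1 ^ (2*n) := by
        rw [hu2def]; field_simp
      rw [hm1, hm2, huu]
    have hinner := ih (fun k => lam₁ (k+1)) (fun k => lam₂ (k+1))
      (fun k => r₁ (k+1)) (fun k => r₂ (k+1))
      (fun k h1 h2 => hl1 (k+1) (by omega) (by omega))
      (fun k h1 h2 => hl2 (k+1) (by omega) (by omega))
      (fun k h1 h2 => hp1 (k+1) (by omega) (by omega))
      (fun k h1 h2 => hd1 (k+1) (by omega) (by omega))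
      (fun k h1 h2 => hp2 (k+1) (by omega) (by omega))
      (fun k h1 h2 => hd2 (k+1) (by omega) (by omega))
      hinnereq
    intro k hk1 hkM
    match k, hk1 with
    | 1, _ => exact ht1
    | (m+2), _ => exact hinner (m+1) (by omega) (by omega)

lemma one_lt_abs_lam (a b : ℝ) (ha : 0 < a) (hb : 0 < b) (hne : a ≠ b) :
    1 < |2 * ((a + b) / (2 * (a - b)))| := by
  have hsub : a - b ≠ 0 := sub_ne_zero.mpr hne
  have h2 : 2 * ((a + b) / (2 * (a - b))) = (a + b) / (a - b) := by
    field_simp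
  rw [h2, abs_div, lt_div_iff₀ (abs_pos.mpr hsub)]
  rw [abs_of_pos (by linarith : (0:ℝ) < a + b), one_mul]
  rcases abs_cases (a - b) with ⟨hc, _⟩ | ⟨hc, _⟩ <;> rw [hc] <;> linarith

/-- Uniqueness of the interface radii of an `N`-layer concentric disk: if the mode-`n`
measurements `eᵀ Υ_N^{(n)} (M_N^{(n)})⁻¹ e` of two structures agree for all sufficiently
large `n`, then the radii coincide. -/
theorem radii_uniqueness (N : ℕ) (hN : 1 ≤ N)
    (σ₁ σ₂ lam₁ lam₂ r₁ r₂ : ℕ → ℝ)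
    (hσ₁0 : σ₁ 0 = 1) (hσ₂0 : σ₂ 0 = 1)
    (hσ₁pos : ∀ k, 1 ≤ k → k ≤ N → 0 < σ₁ k)
    (hσ₂pos : ∀ k, 1 ≤ k → k ≤ N → 0 < σ₂ k)
    (hσ₁ne : ∀ k, 1 ≤ k → k ≤ N → σ₁ k ≠ σ₁ (k - 1))
    (hσ₂ne : ∀ k, 1 ≤ k → k ≤ N → σ₂ k ≠ σ₂ (k - 1))
    (hlam₁ : ∀ k, 1 ≤ k → k ≤ N → lam₁ k = (σ₁ k + σ₁ (k - 1)) / (2 * (σ₁ k - σ₁ (k - 1))))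
    (hlam₂ : ∀ k, 1 ≤ k → k ≤ N → lam₂ k = (σ₂ k + σ₂ (k - 1)) / (2 * (σ₂ k - σ₂ (k - 1))))
    (hr₁ : ∀ k, 1 ≤ k → k < N → r₁ (k + 1) < r₁ k) (hr₁N : 0 < r₁ N)
    (hr₂ : ∀ k, 1 ≤ k → k < N → r₂ (k + 1) < r₂ k) (hr₂N : 0 < r₂ N)
    (hinv₁ : ∀ n : ℕ, 0 < n → IsUnit (GPM N lam₁ r₁ n).det)
    (hinv₂ : ∀ n : ℕ, 0 < n → IsUnit (GPM N lam₂ r₂ n).det)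
    (h : ∃ n₀ : ℕ, 1 ≤ n₀ ∧ ∀ n : ℕ, n₀ ≤ n →
      (fun _ : Fin N => (1 : ℝ)) ⬝ᵥ
          ((Upsilon N r₁ n * (GPM N lam₁ r₁ n)⁻¹) *ᵥ fun _ : Fin N => (1 : ℝ)) =
        (fun _ : Fin N => (1 : ℝ)) ⬝ᵥ
          ((Upsilon N r₂ n * (GPM N lam₂ r₂ n)⁻¹) *ᵥ fun _ : Fin N => (1 : ℝ))) :
    ∀ k, 1 ≤ k → k ≤ N → r₁ k = r₂ k := by
  have hlam1abs : ∀ k, 1 ≤ k → k ≤ N → 1 < |2 * lam₁ k| := by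
    intro k h1 h2
    have hb : 0 < σ₁ (k-1) := by
      rcases eq_or_lt_of_le h1 with hk | hk
      · rw [← hk]; norm_num [hσ₁0]
      · exact hσ₁pos (k-1) (by omega) (by omega)
    rw [hlam₁ k h1 h2]
    exact one_lt_abs_lam _ _ (hσ₁pos k h1 h2) hb (hσ₁ne k h1 h2)
  have hlam2abs : ∀ k, 1 ≤ k → k ≤ N → 1 < |2 * lam₂ k| := by
    intro k h1 h2
    have hb : 0 < σ₂ (k-1) := by
      rcases eq_or_lt_of_le h1 with hk | hk
      · rw [← hk]; norm_num [hσ₂0]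
      · exact hσ₂pos (k-1) (by omega) (by omega)
    rw [hlam₂ k h1 h2]
    exact one_lt_abs_lam _ _ (hσ₂pos k h1 h2) hb (hσ₂ne k h1 h2)
  have hp1 : ∀ k, 1 ≤ k → k ≤ N → 0 < r₁ k := by
    intro k h1 h2
    rcases eq_or_lt_of_le h2 with hk | hk
    · rw [hk]; exact hr₁N
    · exact lt_trans hr₁N (r_chain N r₁ hr₁ k N h1 hk le_rfl)
  have hp2 : ∀ k, 1 ≤ k → k ≤ N → 0 < r₂ k := by
    intro k h1 h2
    rcases eq_or_lt_of_le h2 with hk | hk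
    · rw [hk]; exact hr₂N
    · exact lt_trans hr₂N (r_chain N r₂ hr₂ k N h1 hk le_rfl)
  have hmeas : ∀ᶠ n in atTop, meas N lam₁ r₁ n = meas N lam₂ r₂ n := by
    obtain ⟨n₀, _, hh⟩ := h
    filter_upwards [eventually_ge_atTop n₀] with n hn
    exact hh n hn
  exact key N lam₁ lam₂ r₁ r₂ hlam1abs hlam2abs hp1 hr₁ hp2 hr₂ hmeas
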